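/- arXiv:0803.4130 — 3 statements merged into one kernel-verified Lean document; each statement's English description precedes it below -/
import Mathlib

section
/- Let π : G → H be a continuous epimorphism of compact Hausdorff groups with kernel P, let X be a G-space and Y an H-space, and let f : X → Y be a perfect continuous surjection satisfying: (1) f(g·x) = π(g)·f(x) for all g ∈ G, x ∈ X; (2) π(G_x) = H_{f(x)} for all x ∈ X; (3) whenever f(x) = f(x'), the points x and x' lie on the same G-orbit. Then the induced map θ : X/P → Y, θ(P·x) = f(x), is well-defined, H-equivariant, isovariant, and the induced map of orbit spaces is a homeomorphism; hence θ is an H-equivariant homeomorphism. -/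
open MulAction

/-- The map `θ : X/P → Y`, `θ(P·x) = f x`, induced by a `π`-equivariant map
`f : X → Y`, where `P = ker π` (well-definedness is the lifting proof). -/
def inducedTheta {G H : Type*} [Group G] [Group H] (π : G →* H)
    {X Y : Type*} [MulAction G X] [MulAction H Y] (f : X → Y)
    (hequi : ∀ (g : G) (x : X), f (g • x) = π g • f x) :
    Quotient (orbitRel π.ker X) → Y :=
  Quotient.lift f (by
    intro a b hab
    obtain ⟨p, hp⟩ := (orbitRel_apply (G := ↥π.ker)).mp hab
    rw [← hp]
    show f ((p : G) • b) = f b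
    rw [hequi, show π (p : G) = 1 from p.2, one_smul])

/-- Let `π : G → H` be a continuous epimorphism of compact Hausdorff groups with
kernel `P`, `X` a `G`-space, `Y` an `H`-space, and `f : X → Y` a perfect
continuous surjection that is `π`-equivariant, maps stabilizers onto
stabilizers, and identifies points only within `G`-orbits.  Then the induced map
`θ : X/P → Y`, `θ(P·x) = f x`, is well defined, equivariant, isovariant, and a
homeomorphism — hence an `H`-equivariant homeomorphism. -/
theorem stmt11 {G H : Type*} [Group G] [TopologicalSpace G] [IsTopologicalGroup G]
    [CompactSpace G] [T2Space G] [Group H] [TopologicalSpace H]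
    [IsTopologicalGroup H] [CompactSpace H] [T2Space H]
    (π : G →* H) (hπc : Continuous π) (hπs : Function.Surjective π)
    {X Y : Type*} [TopologicalSpace X] [TopologicalSpace Y]
    [MulAction G X] [ContinuousSMul G X] [MulAction H Y] [ContinuousSMul H Y]
    (f : X → Y) (hfc : Continuous f) (hfcl : IsClosedMap f)
    (hffib : ∀ y : Y, IsCompact (f ⁻¹' {y})) (hfs : Function.Surjective f)
    (hequi : ∀ (g : G) (x : X), f (g • x) = π g • f x)
    (hstab : ∀ x : X, (MulAction.stabilizer G x).map π = MulAction.stabilizer H (f x))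
    (horb : ∀ x x' : X, f x = f x' → x ∈ orbit G x') :
    IsHomeomorph (inducedTheta π f hequi) ∧
      (∀ (g : G) (x : X),
        inducedTheta π f hequi (Quotient.mk (orbitRel π.ker X) (g • x)) =
          π g • inducedTheta π f hequi (Quotient.mk (orbitRel π.ker X) x)) ∧
      (∀ (x : X) (g : G),
        Quotient.mk (orbitRel π.ker X) (g • x) = Quotient.mk (orbitRel π.ker X) x ↔
          π g ∈ MulAction.stabilizer H (f x)) := by
  classical
  set θ := inducedTheta π f hequi with hθ
  have hmk : ∀ x : X, θ (Quotient.mk (orbitRel π.ker X) x) = f x := fun x => rfl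
  -- key lemma: if π g ∈ stabilizer H (f x) then g•x and x are in same P-orbit
  have key : ∀ (x : X) (g : G), π g ∈ MulAction.stabilizer H (f x) →
      Quotient.mk (orbitRel π.ker X) (g • x) = Quotient.mk (orbitRel π.ker X) x := by
    intro x g hg
    rw [← hstab x] at hg
    obtain ⟨s, hs, hsg⟩ := hg
    have hker : g * s⁻¹ ∈ π.ker := by
      simp [MonoidHom.mem_ker, map_mul, hsg]
    apply Quotient.sound
    refine (orbitRel_apply (G := ↥π.ker)).mpr ⟨⟨g * s⁻¹, hker⟩, ?_⟩
    show (g * s⁻¹) • x = g • x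
    rw [mul_smul, inv_smul_eq_iff.mpr (by exact (MulAction.mem_stabilizer_iff.mp hs).symm)]
  have hinj : Function.Injective θ := by
    intro a b hab
    induction a using Quotient.ind
    induction b using Quotient.ind
    rename_i x x'
    have hf : f x = f x' := hab
    obtain ⟨g, hg⟩ := horb x x' hf
    have hg' : g • x' = x := hg
    have : π g ∈ MulAction.stabilizer H (f x') := by
      rw [MulAction.mem_stabilizer_iff, ← hequi, hg', hf]
    rw [← hg']
    exact key x' g this
  have hsurj : Function.Surjective θ := by
    intro y
    obtain ⟨x, hx⟩ := hfs y
    exact ⟨Quotient.mk _ x, hx⟩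
  have hcont : Continuous θ := Continuous.quotient_lift hfc _
  have hclosed : IsClosedMap θ := by
    intro C hC
    have himg : θ '' C = f '' (Quotient.mk (orbitRel π.ker X) ⁻¹' C) := by
      ext y
      constructor
      · rintro ⟨c, hc, rfl⟩
        induction c using Quotient.ind
        rename_i x
        exact ⟨x, hc, rfl⟩
      · rintro ⟨x, hx, rfl⟩
        exact ⟨Quotient.mk _ x, hx, rfl⟩
    rw [himg]
    exact hfcl _ (hC.preimage continuous_quotient_mk')
  have hopen : IsOpenMap θ := by
    intro U hU
    have : θ '' U = (θ '' Uᶜ)ᶜ := by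
      rw [← Set.image_compl_eq ⟨hinj, hsurj⟩, compl_compl]
    rw [this]
    exact (hclosed _ hU.isClosed_compl).isOpen_compl
  refine ⟨⟨hcont, hopen, hinj, hsurj⟩, ?_, ?_⟩
  · intro g x
    exact hequi g x
  · intro x g
    constructor
    · intro h
      have := congrArg θ h
      rw [hmk, hmk, hequi] at this
      exact this
    · exact key x g
end

section
/- Let π' : K → L be a continuous epimorphism of compact groups with kernel Q, let π : G → H be a continuous epimorphism of compact groups extending π' (where K ≤ G and L ≤ H are closed subgroups with π(K) = L), let P = ker π, let S be a K-space, T an L-space, and f' : S → T a perfect surjection satisfying the Q-orbit-projection properties with respect to π'. Then the formula f([g, s]_K) = [π(g), f'(s)]_L gives a well-defined continuous map f : G ×_K S → H ×_L T between twisted products, f is a perfect surjection, and f satisfies the P-orbit-projection properties with respect to π (equivariance f(g·w) = π(g)·f(w), stabilizer condition π(G_w) = H_{f(w)}, and f(w) = f(w') implies w, w' are on the same G-orbit). -/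
open MulAction

/-- The defining relation of the twisted product `G ×_K S`:
`(gk, s) ∼ (g, k·s)` for `k ∈ K`. -/
def twistedSetoid (G : Type*) [Group G] (K : Subgroup G) (S : Type*)
    [MulAction K S] : Setoid (G × S) where
  r a b := ∃ k : K, b.1 = a.1 * (k : G) ∧ a.2 = k • b.2
  iseqv := by
    constructor
    · intro a; exact ⟨1, by simp⟩
    · rintro a b ⟨k, h1, h2⟩
      refine ⟨k⁻¹, ?_, ?_⟩
      · rw [h1]; simp [mul_assoc]
      · rw [h2]; simp
    · rintro a b c ⟨k, h1, h2⟩ ⟨l, h3, h4⟩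
      refine ⟨k * l, ?_, ?_⟩
      · rw [h3, h1]; simp [mul_assoc]
      · rw [h2, h4, mul_smul]

/-- The `G`-action `g'·[g, s] = [g'g, s]` on the twisted product `G ×_K S`. -/
instance twistedAction (G : Type*) [Group G] (K : Subgroup G) (S : Type*)
    [MulAction K S] : MulAction G (Quotient (twistedSetoid G K S)) where
  smul g := Quotient.map (fun p => (g * p.1, p.2)) (by
    rintro a b ⟨k, h1, h2⟩
    refine ⟨k, ?_, h2⟩
    show g * b.1 = g * a.1 * (k : G)
    rw [h1, mul_assoc])
  one_smul := by
    intro q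
    induction q using Quotient.ind
    exact congrArg (Quotient.mk _) (Prod.ext (one_mul _) rfl)
  mul_smul := by
    intro g h q
    induction q using Quotient.ind
    exact congrArg (Quotient.mk _) (Prod.ext (mul_assoc _ _ _) rfl)

/-- The map `G ×_K S → H ×_L T`, `[g, s] ↦ [π g, f' s]`, induced by a
compatible pair `(π, f')` (well-definedness is the lifting proof). -/
def twistedMap {G H : Type*} [Group G] [Group H] {K : Subgroup G}
    {L : Subgroup H} (π : G →* H) (π' : K →* L)
    (hcomm : ∀ k : K, ((π' k : L) : H) = π (k : G))
    {S T : Type*} [MulAction K S] [MulAction L T] (f' : S → T)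
    (hequi' : ∀ (k : K) (s : S), f' (k • s) = π' k • f' s) :
    Quotient (twistedSetoid G K S) → Quotient (twistedSetoid H L T) :=
  Quotient.map (fun p => (π p.1, f' p.2)) (by
    rintro a b ⟨k, h1, h2⟩
    refine ⟨π' k, ?_, ?_⟩
    · show π b.1 = π a.1 * ((π' k : L) : H)
      rw [h1, map_mul, hcomm]
    · show f' a.2 = π' k • f' b.2
      rw [h2, hequi'])

/-- Let `π : G → H` be a continuous epimorphism of compact groups restricting to
an epimorphism `π' : K → L` of closed subgroups (`P = ker π`, `Q = ker π'`), let
`S` be a `K`-space, `T` an `L`-space, and `f' : S → T` a perfect surjection with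
the `Q`-orbit-projection properties relative to `π'`.  Then
`f([g,s]) = [π g, f' s]` is a well-defined continuous perfect surjection
`G ×_K S → H ×_L T` satisfying the `P`-orbit-projection properties relative to
`π`. -/
theorem stmt15 {G H : Type*} [Group G] [TopologicalSpace G] [IsTopologicalGroup G]
    [CompactSpace G] [T2Space G] [Group H] [TopologicalSpace H]
    [IsTopologicalGroup H] [CompactSpace H] [T2Space H]
    (K : Subgroup G) (L : Subgroup H)
    (hKc : IsClosed (K : Set G)) (hLc : IsClosed (L : Set H))
    (π : G →* H) (hπc : Continuous π) (hπs : Function.Surjective π)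
    (π' : K →* L) (hπ's : Function.Surjective π')
    (hcomm : ∀ k : K, ((π' k : L) : H) = π (k : G))
    {S T : Type*} [TopologicalSpace S] [TopologicalSpace T]
    [MulAction K S] [ContinuousSMul K S] [MulAction L T] [ContinuousSMul L T]
    (f' : S → T) (hf'c : Continuous f') (hf'cl : IsClosedMap f')
    (hf'fib : ∀ t : T, IsCompact (f' ⁻¹' {t})) (hf's : Function.Surjective f')
    (hequi' : ∀ (k : K) (s : S), f' (k • s) = π' k • f' s)
    (hstab' : ∀ s : S,
      (MulAction.stabilizer K s).map π' = MulAction.stabilizer L (f' s))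
    (horb' : ∀ s s' : S, f' s = f' s' → s ∈ orbit K s') :
    (∀ (g : G) (s : S),
        twistedMap π π' hcomm f' hequi' (Quotient.mk (twistedSetoid G K S) (g, s)) =
          Quotient.mk (twistedSetoid H L T) (π g, f' s)) ∧
      Continuous (twistedMap π π' hcomm f' hequi') ∧
      Function.Surjective (twistedMap π π' hcomm f' hequi') ∧
      IsClosedMap (twistedMap π π' hcomm f' hequi') ∧
      (∀ w, IsCompact (twistedMap π π' hcomm f' hequi' ⁻¹' {w})) ∧
      (∀ (g : G) (w : Quotient (twistedSetoid G K S)),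
        twistedMap π π' hcomm f' hequi' (g • w) =
          π g • twistedMap π π' hcomm f' hequi' w) ∧
      (∀ w : Quotient (twistedSetoid G K S),
        (MulAction.stabilizer G w).map π =
          MulAction.stabilizer H (twistedMap π π' hcomm f' hequi' w)) ∧
      (∀ w w' : Quotient (twistedSetoid G K S),
        twistedMap π π' hcomm f' hequi' w = twistedMap π π' hcomm f' hequi' w' →
          w ∈ orbit G w') := by
  
  classical
  haveI : CompactSpace K := isCompact_iff_compactSpace.mp (hKc.isCompact)
  haveI : CompactSpace L := isCompact_iff_compactSpace.mp (hLc.isCompact)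
  set f : Quotient (twistedSetoid G K S) → Quotient (twistedSetoid H L T) :=
    twistedMap π π' hcomm f' hequi' with hfdef
  set F : G × S → H × T := Prod.map (⇑π) f' with hFdef
  have hmk : ∀ (g : G) (s : S),
      f (Quotient.mk (twistedSetoid G K S) (g, s)) =
        Quotient.mk (twistedSetoid H L T) (π g, f' s) := fun g s => rfl
  have hmk' : ∀ p : G × S,
      f (Quotient.mk (twistedSetoid G K S) p) =
        Quotient.mk (twistedSetoid H L T) (F p) := fun p => rfl
  have hsmulmk : ∀ (g : G) (p : G × S),
      g • Quotient.mk (twistedSetoid G K S) p =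
        Quotient.mk (twistedSetoid G K S) (g * p.1, p.2) := fun g p => rfl
  have hsmulmkH : ∀ (h : H) (p : H × T),
      h • Quotient.mk (twistedSetoid H L T) p =
        Quotient.mk (twistedSetoid H L T) (h * p.1, p.2) := fun h p => rfl
  have hFc : Continuous F := hπc.prodMap hf'c
  have hFproper : IsProperMap F :=
    (hπc.isProperMap).prodMap
      (isProperMap_iff_isClosedMap_and_compact_fibers.mpr ⟨hf'c, hf'cl, hf'fib⟩)
  have hqG : Topology.IsQuotientMap (Quotient.mk (twistedSetoid G K S)) :=
    isQuotientMap_quot_mk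
  have hqH : Topology.IsQuotientMap (Quotient.mk (twistedSetoid H L T)) :=
    isQuotientMap_quot_mk
  -- equivariance
  have hequi : ∀ (g : G) (w : Quotient (twistedSetoid G K S)),
      f (g • w) = π g • f w := by
    intro g w
    induction w using Quotient.ind with
    | _ p =>
      rw [hsmulmk, hmk', hmk', hsmulmkH]
      show Quotient.mk _ (π (g * p.1), f' p.2) = Quotient.mk _ (π g * π p.1, f' p.2)
      rw [map_mul]
  -- continuity
  have hcont : Continuous f := by
    rw [hqG.continuous_iff]
    exact (continuous_quot_mk).comp hFc
  -- surjectivity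
  have hsurj : Function.Surjective f := by
    intro w
    induction w using Quotient.ind with
    | _ p =>
      obtain ⟨g, hg⟩ := hπs p.1
      obtain ⟨s, hs⟩ := hf's p.2
      exact ⟨Quotient.mk _ (g, s), by rw [hmk, hg, hs]⟩
  -- saturation of a closed set is closed
  have hsat : ∀ A : Set (H × T), IsClosed A →
      IsClosed {z : H × T | ∃ a ∈ A, (twistedSetoid H L T).r z a} := by
    intro A hA
    have hset : {z : H × T | ∃ a ∈ A, (twistedSetoid H L T).r z a} =
        Prod.snd '' {p : ↥L × (H × T) |
          (p.2.1 * (p.1 : H), (p.1 : L)⁻¹ • p.2.2) ∈ A} := by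
      ext z
      constructor
      · rintro ⟨a, ha, l, h1, h2⟩
        refine ⟨(l, z), ?_, rfl⟩
        have : (z.1 * (l : H), (l : L)⁻¹ • z.2) = a := by
          refine Prod.ext ?_ ?_
          · exact h1.symm
          · rw [h2]; simp
        simpa [this] using ha
      · rintro ⟨⟨l, z'⟩, hp, rfl⟩
        exact ⟨(z'.1 * (l : H), (l : L)⁻¹ • z'.2), hp, l, rfl, by simp⟩
    rw [hset]
    apply isClosedMap_snd_of_compactSpace
    apply hA.preimage
    refine Continuous.prodMk ?_ ?_
    · exact (continuous_fst.comp continuous_snd).mul (continuous_subtype_val.comp continuous_fst)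
    · exact (continuous_inv.comp continuous_fst).smul (continuous_snd.comp continuous_snd)
  -- closedness
  have hclosed : IsClosedMap f := by
    intro C hC
    rw [← hqH.isClosed_preimage]
    have key : Quotient.mk (twistedSetoid H L T) ⁻¹' (f '' C) =
        {z : H × T | ∃ a ∈ F '' (Quotient.mk (twistedSetoid G K S) ⁻¹' C),
          (twistedSetoid H L T).r z a} := by
      ext z
      simp only [Set.mem_preimage, Set.mem_image, Set.mem_setOf_eq]
      constructor
      · rintro ⟨w, hw, hwz⟩
        induction w using Quotient.ind with
        | _ x =>
          rw [hmk'] at hwz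
          exact ⟨F x, ⟨x, hw, rfl⟩, (twistedSetoid H L T).symm (Quotient.eq.mp hwz)⟩
      · rintro ⟨a, ⟨x, hx, rfl⟩, hrel⟩
        exact ⟨Quotient.mk _ x, hx, by
          rw [hmk']; exact Quotient.sound ((twistedSetoid H L T).symm hrel)⟩
    rw [key]
    exact hsat _ (hFproper.isClosedMap _ (hC.preimage continuous_quot_mk))
  -- compact fibers
  have hfib : ∀ w, IsCompact (f ⁻¹' {w}) := by
    intro w
    induction w using Quotient.ind with
    | _ y =>
      have hclass : IsCompact {z : H × T | (twistedSetoid H L T).r z y} := by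
        have : {z : H × T | (twistedSetoid H L T).r z y} =
            Set.range (fun l : L => ((y.1 * (l : H)⁻¹ : H), (l : L) • y.2)) := by
          ext z
          constructor
          · rintro ⟨l, h1, h2⟩
            refine ⟨l, ?_⟩
            refine (Prod.ext ?_ ?_).symm
            · rw [h1]; simp [mul_assoc]
            · exact h2
          · rintro ⟨l, rfl⟩
            exact ⟨l, by simp [mul_assoc], rfl⟩
        rw [this]
        exact isCompact_range (by
          refine Continuous.prodMk ?_ ?_
          · exact continuous_const.mul (continuous_subtype_val.comp continuous_inv)
          · exact continuous_id.smul continuous_const)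
      have hset : f ⁻¹' {Quotient.mk (twistedSetoid H L T) y} =
          Quotient.mk (twistedSetoid G K S) ''
            (F ⁻¹' {z : H × T | (twistedSetoid H L T).r z y}) := by
        ext w
        simp only [Set.mem_preimage, Set.mem_singleton_iff, Set.mem_image, Set.mem_setOf_eq]
        constructor
        · intro hw
          induction w using Quotient.ind with
          | _ x =>
            exact ⟨x, Quotient.eq.mp (by rw [← hmk' x]; exact hw), rfl⟩
        · rintro ⟨x, hx, rfl⟩
          rw [hmk']
          exact Quotient.sound hx
      rw [hset]
      exact (hFproper.isCompact_preimage hclass).image continuous_quot_mk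
  -- stabilizers
  have hstab : ∀ w : Quotient (twistedSetoid G K S),
      (MulAction.stabilizer G w).map π = MulAction.stabilizer H (f w) := by
    intro w
    induction w using Quotient.ind with
    | _ p =>
      obtain ⟨g, s⟩ := p
      ext h
      simp only [Subgroup.mem_map]
      constructor
      · rintro ⟨g₀, hg₀, rfl⟩
        rw [mem_stabilizer_iff] at hg₀ ⊢
        rw [← hequi, hg₀]
      · intro hh
        rw [mem_stabilizer_iff, hmk, hsmulmkH] at hh
        obtain ⟨l, h1, h2⟩ := Quotient.eq.mp hh
        -- h1 : π g = h * π g * ↑l,  h2 : f' s = l • f' s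
        have hlmem : l ∈ MulAction.stabilizer L (f' s) := by
          rw [mem_stabilizer_iff]; exact h2.symm
        rw [← hstab' s] at hlmem
        obtain ⟨k, hk, hkl⟩ := Subgroup.mem_map.mp hlmem
        refine ⟨g * (k : G)⁻¹ * g⁻¹, ?_, ?_⟩
        · rw [mem_stabilizer_iff, hsmulmk]
          apply Quotient.sound
          refine ⟨k, ?_, ?_⟩
          · show g = g * (k : G)⁻¹ * g⁻¹ * g * (k : G)
            group
          · exact (mem_stabilizer_iff.mp hk).symm
        · have hl : π (k : G) = (l : H) := by rw [← hcomm, hkl]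
          rw [map_mul, map_mul, map_inv, map_inv, hl]
          rw [eq_comm, eq_mul_inv_iff_mul_eq, eq_mul_inv_iff_mul_eq]
          exact h1.symm
  -- orbits
  have horb : ∀ w w' : Quotient (twistedSetoid G K S),
      f w = f w' → w ∈ orbit G w' := by
    intro w w' hww
    induction w using Quotient.ind with
    | _ p =>
      induction w' using Quotient.ind with
      | _ p' =>
        obtain ⟨g, s⟩ := p
        obtain ⟨g', s'⟩ := p'
        rw [hmk, hmk] at hww
        obtain ⟨l, h1, h2⟩ := Quotient.eq.mp hww
        obtain ⟨k, hk⟩ := hπ's l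
        have hfs : f' s = f' (k • s') := by rw [hequi', hk]; exact h2
        obtain ⟨k₁, hk₁⟩ := horb' s (k • s') hfs
        rw [mem_orbit_iff]
        refine ⟨g * ((k₁ * k : K) : G) * g'⁻¹, ?_⟩
        rw [hsmulmk]
        apply Quotient.sound
        refine ⟨(k₁ * k)⁻¹, ?_, ?_⟩
        · show g = g * ((k₁ * k : K) : G) * g'⁻¹ * g' * (((k₁ * k)⁻¹ : K) : G)
          simp [mul_assoc]
        · show s' = (k₁ * k)⁻¹ • s
          rw [eq_inv_smul_iff, mul_smul]
          exact hk₁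
  exact ⟨hmk, hcont, hsurj, hclosed, hfib, hequi, hstab, horb⟩
end

section
/- Let G be a compact Hausdorff group and let {P_α}_{α<ω} be a decreasing transfinite family of closed normal subgroups of G with P_1 = G, P_β ≤ P_α for α < β, P_α = ⋂_{α'<α} P_{α'} at limit ordinals, and ⋂_{α<ω} P_α = {e}. Let G act continuously on a compact Hausdorff space X. Then the natural map f : X → lim← {X/P_α, f^β_α}, f(x) = (P_α·x)_α, into the inverse limit of the P_α-orbit spaces along the natural projections f^β_α : X/P_β → X/P_α (α < β), is a homeomorphism, and it is equivariant with respect to the natural actions. -/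
open MulAction

variable {G : Type*} [Group G] {X : Type*} [MulAction G X]

/-- The natural action of `G` on the `P`-orbit space `X/P`, for `P ⊴ G`. -/
instance quotMulAction (P : Subgroup G) [hN : P.Normal] :
    MulAction G (Quotient (orbitRel P X)) where
  smul g := Quotient.map (fun x => g • x) (by
    intro a b hab
    obtain ⟨p, hp⟩ := hab
    refine ⟨⟨g * (p : G) * g⁻¹, hN.conj_mem (p : G) p.2 g⟩, ?_⟩
    show (g * (p : G) * g⁻¹) • (g • b) = g • a
    rw [smul_smul, show g * (p : G) * g⁻¹ * g = g * (p : G) by group, ← smul_smul, ← hp]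
    rfl)
  one_smul := by
    intro q
    induction q using Quotient.ind
    exact congrArg _ (one_smul G _)
  mul_smul := by
    intro g h q
    induction q using Quotient.ind
    exact congrArg _ (mul_smul g h _)

/-- The natural projection `X/Q → X/P` of orbit spaces for `Q ≤ P`. -/
def orbitProj {G : Type*} [Group G] (X : Type*) [MulAction G X]
    {P Q : Subgroup G} (h : Q ≤ P) :
    Quotient (orbitRel Q X) → Quotient (orbitRel P X) :=
  Quotient.map id (by
    intro a b hab
    obtain ⟨q, hq⟩ := (orbitRel_apply (G := ↥Q)).mp hab
    exact ⟨⟨(q : G), h q.2⟩, hq⟩)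

/-- Let `{P α}` be a decreasing transfinite family of closed normal subgroups of
a compact Hausdorff group `G` with `P ⊥ = G`, `P α = ⋂_{β<α} P β` at limit
indices, and `⋂ P α = {e}`, and let `G` act continuously on a compact Hausdorff
space `X`.  Then the natural map `x ↦ (P_α·x)_α` is an equivariant
homeomorphism of `X` onto the inverse limit of the orbit spaces `X/P_α`. -/
theorem stmt18 {G : Type*} [Group G] [TopologicalSpace G] [IsTopologicalGroup G]
    [CompactSpace G] [T2Space G] {X : Type*} [TopologicalSpace X]
    [CompactSpace X] [T2Space X] [MulAction G X] [ContinuousSMul G X]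
    {ι : Type*} [LinearOrder ι] [OrderBot ι]
    (P : ι → Subgroup G) (hNor : ∀ α, (P α).Normal)
    (hCl : ∀ α, IsClosed ((P α : Subgroup G) : Set G))
    (hmono : ∀ {α β : ι}, α ≤ β → P β ≤ P α)
    (hbot : P ⊥ = ⊤)
    (hlim : ∀ α : ι, (∀ β < α, ∃ γ, β < γ ∧ γ < α) →
      P α = ⨅ (β : ι) (_ : β < α), P β)
    (htriv : ⨅ α, P α = ⊥) :
    IsHomeomorph (fun x : X =>
        (⟨fun α => Quotient.mk (orbitRel (P α) X) x, fun _ _ _ => rfl⟩ :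
          {u : ∀ α, Quotient (orbitRel (P α) X) //
            ∀ (α β : ι) (hab : α ≤ β), orbitProj X (hmono hab) (u β) = u α})) ∧
      ∀ (g : G) (x : X) (α : ι),
        haveI := hNor α
        Quotient.mk (orbitRel (P α) X) (g • x) =
          g • Quotient.mk (orbitRel (P α) X) x := by
  
  haveI : Nonempty ι := ⟨⊥⟩
  haveI : ∀ α, CompactSpace ↥(P α) := fun α =>
    isCompact_iff_compactSpace.mp (hCl α).isCompact
  haveI : ∀ α, T2Space (Quotient (orbitRel (P α) X)) := by
    intro α
    haveI : ProperSMul ↥(P α) X := by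
      rw [properSMul_iff]
      exact Continuous.isProperMap
        ((continuous_fst.smul continuous_snd).prodMk continuous_snd)
    exact t2Space_quotient_mulAction_of_properSMul
  refine ⟨?_, fun g x α => rfl⟩
  rw [isHomeomorph_iff_continuous_bijective]
  refine ⟨?_, ?_, ?_⟩
  · exact Continuous.subtype_mk (continuous_pi fun α => continuous_quotient_mk') _
  · -- injective
    intro x y h
    have h' : ∀ α, Quotient.mk (orbitRel (P α) X) x = Quotient.mk (orbitRel (P α) X) y :=
      fun α => congrFun (congrArg Subtype.val h) α
    set S : ι → Set G := fun α => {g : G | g ∈ P α ∧ g • y = x} with hS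
    have hne : ∀ α, (S α).Nonempty := by
      intro α
      obtain ⟨g, hg⟩ := Quotient.exact (h' α)
      exact ⟨(g : G), g.2, hg⟩
    have hcl : ∀ α, IsClosed (S α) := fun α =>
      (hCl α).inter (isClosed_singleton.preimage (continuous_id.smul continuous_const))
    have hdir : Directed (· ⊇ ·) S := by
      intro α β
      rcases le_total α β with hab | hab
      · exact ⟨β, fun g hg => ⟨hmono hab hg.1, hg.2⟩, fun g hg => hg⟩
      · exact ⟨α, fun g hg => hg, fun g hg => ⟨hmono hab hg.1, hg.2⟩⟩
    obtain ⟨g, hg⟩ := IsCompact.nonempty_iInter_of_directed_nonempty_isCompact_isClosed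
      S hdir hne (fun α => (hcl α).isCompact) hcl
    have hg1 : g = 1 := by
      have : g ∈ ⨅ α, P α := by
        rw [Subgroup.mem_iInf]
        exact fun α => (Set.mem_iInter.mp hg α).1
      rwa [htriv, Subgroup.mem_bot] at this
    have := (Set.mem_iInter.mp hg ⊥).2
    rw [hg1, one_smul] at this
    exact this.symm
  · -- surjective
    intro u
    set T : ι → Set X := fun α => {x : X | Quotient.mk (orbitRel (P α) X) x = u.1 α} with hT
    have hne : ∀ α, (T α).Nonempty := by
      intro α
      obtain ⟨x, hx⟩ := Quotient.exists_rep (u.1 α)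
      exact ⟨x, hx⟩
    have hcl : ∀ α, IsClosed (T α) := by
      intro α
      obtain ⟨x₀, hx₀⟩ := Quotient.exists_rep (u.1 α)
      have : T α = (fun g : ↥(P α) => g • x₀) '' Set.univ := by
        ext z
        simp only [hT, Set.mem_setOf_eq, Set.image_univ, Set.mem_range]
        rw [← hx₀]
        constructor
        · intro h
          obtain ⟨g, hg⟩ := Quotient.exact h
          exact ⟨g, hg⟩
        · rintro ⟨g, rfl⟩
          exact Quotient.sound ⟨g, rfl⟩
      rw [this]
      exact (CompactSpace.isCompact_univ.image (continuous_id.smul continuous_const)).isClosed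
    have hanti : ∀ {α β : ι}, α ≤ β → T β ⊆ T α := by
      intro α β hab z hz
      have h2 := u.2 α β hab
      have hz' : Quotient.mk (orbitRel (P β) X) z = u.1 β := hz
      show Quotient.mk (orbitRel (P α) X) z = u.1 α
      rw [← h2, ← hz']
      rfl
    have hdir : Directed (· ⊇ ·) T := by
      intro α β
      rcases le_total α β with hab | hab
      · exact ⟨β, hanti hab, fun z hz => hz⟩
      · exact ⟨α, fun z hz => hz, hanti hab⟩
    obtain ⟨x, hx⟩ := IsCompact.nonempty_iInter_of_directed_nonempty_isCompact_isClosed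
      T hdir hne (fun α => (hcl α).isCompact) hcl
    exact ⟨x, Subtype.ext (funext fun α => Set.mem_iInter.mp hx α)⟩
end
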